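/- Let S and T be disjoint finite sets, σ' a permutation of S and σ'' a permutation of T. In the free ℚ-vector spaces with bases the permutations of S, of T, and of S ∪ T respectively, let μ denote the bilinear juxtaposition map determined on basis elements by τ' ⊗ τ'' ↦ τ' ⊎ τ''. Then μ(p_{σ'} ⊗ p_{σ''}) = p_{σ' ⊎ σ''}, where p_σ := Σ_{σ' ≤ σ} μ̈(σ', σ)·σ' is the powersum element defined via the Möbius function μ̈ of the restriction order. -/

import Mathlib

/-!
STATEMENT 11: For disjoint finite sets `S`, `T`, a permutation `σ'` of `S` and a
permutation `σ''` of `T`, the bilinear juxtaposition map `μ` (determined on basis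
permutations by `τ' ⊗ τ'' ↦ τ' ⊎ τ''`) satisfies `μ(p_{σ'} ⊗ p_{σ''}) = p_{σ' ⊎ σ''}`,
where `p_σ = Σ_{σ₀ ≤ σ} μ̈(σ₀, σ) · σ₀` is the powersum element defined via the Möbius
function `μ̈` of the restriction order.  Permutations of a finite subset of `α` are
encoded as permutations of `α` fixing the complement pointwise, the free vector spaces
as `Equiv.Perm α →₀ ℚ`, and the juxtaposition `σ' ⊎ σ''` as the product `σ' * σ''`.
The Möbius function is characterized by `μ̈(σ,σ) = 1` and, for `τ < σ`,
`Σ_{τ ≤ ρ ≤ σ} μ̈(ρ, σ) = 0`.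
-/

open scoped Classical

variable {α : Type*} [Fintype α] [DecidableEq α]

/-- The restriction order on permutations: `RestrLE τ σ` holds iff every `τ`-orbit is
contained in a `σ`-orbit and `τ` acts on each of its orbits as the first-return map
of `σ`. -/
def RestrLE (τ σ : Equiv.Perm α) : Prop :=
  (∀ a b : α, τ.SameCycle a b → σ.SameCycle a b) ∧
  ∀ a : α, ∃ k : ℕ, 0 < k ∧ τ a = (σ ^ k) a ∧
    ∀ j : ℕ, 0 < j → j < k → ¬ τ.SameCycle a ((σ ^ j) a)

/-- The powersum element `p_σ = Σ_{τ ≤ σ} μ̈(τ, σ) · τ` in the free vector space on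
permutations, for a given Möbius function `mu` of the restriction order. -/
noncomputable def powersum (mu : Equiv.Perm α → Equiv.Perm α → ℚ) (σ : Equiv.Perm α) :
    Equiv.Perm α →₀ ℚ :=
  ∑ τ ∈ Finset.univ.filter (fun τ => RestrLE τ σ), Finsupp.single τ (mu τ σ)

/-- The bilinear juxtaposition map, determined on basis elements by
`τ' ⊗ τ'' ↦ τ' * τ''`. -/
noncomputable def juxt (p q : Equiv.Perm α →₀ ℚ) : Equiv.Perm α →₀ ℚ :=
  p.sum fun τ' c => q.sum fun τ'' d => Finsupp.single (τ' * τ'') (c * d)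

namespace JuxtAux

lemma zpow_fix {σ : Equiv.Perm α} {a : α} (h : σ a = a) (i : ℤ) : (σ ^ i) a = a :=
  Function.IsFixedPt.perm_zpow h i

lemma pow_fix {σ : Equiv.Perm α} {a : α} (h : σ a = a) (k : ℕ) : (σ ^ k) a = a :=
  Function.IsFixedPt.perm_pow h k

lemma restrLE_refl (σ : Equiv.Perm α) : RestrLE σ σ :=
  ⟨fun _ _ h => h, fun a => ⟨1, one_pos, by simp,
    fun j hj hj1 => absurd rfl (by omega : j ≠ j)⟩⟩

lemma restrLE_fix {τ σ : Equiv.Perm α} (h : RestrLE τ σ) {a : α} (ha : σ a = a) : τ a = a := by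
  obtain ⟨i, hi⟩ := h.1 a (τ a) ⟨1, by simp⟩
  rw [zpow_fix ha] at hi
  exact hi.symm

lemma restrLE_eq {τ σ : Equiv.Perm α} (h : RestrLE τ σ)
    (h2 : ∀ a b, σ.SameCycle a b → τ.SameCycle a b) : τ = σ := by
  ext a
  obtain ⟨k, hk, hτ, hmin⟩ := h.2 a
  by_cases hk1 : k = 1
  · rw [hτ, hk1, pow_one]
  · exact absurd (h2 a ((σ ^ 1) a) ⟨1, by simp⟩) (hmin 1 one_pos (by omega))

/-- The set of same-cycle pairs; its cardinality is the induction measure. -/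
noncomputable def scPairs (σ : Equiv.Perm α) : Finset (α × α) :=
  Finset.univ.filter fun p => σ.SameCycle p.1 p.2

lemma scPairs_subset {τ σ : Equiv.Perm α} (h : RestrLE τ σ) : scPairs τ ⊆ scPairs σ := by
  intro p hp
  simp only [scPairs, Finset.mem_filter, Finset.mem_univ, true_and] at *
  exact h.1 _ _ hp

lemma scPairs_card_lt {τ σ : Equiv.Perm α} (h : RestrLE τ σ) (hne : τ ≠ σ) :
    (scPairs τ).card < (scPairs σ).card := by
  refine Finset.card_lt_card (Finset.ssubset_iff_subset_ne.mpr ⟨scPairs_subset h, ?_⟩)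
  intro heq
  refine hne (restrLE_eq h ?_)
  intro a b hab
  have hmem : (a, b) ∈ scPairs τ := by
    rw [heq]
    simp only [scPairs, Finset.mem_filter, Finset.mem_univ, true_and]
    exact hab
  simpa only [scPairs, Finset.mem_filter, Finset.mem_univ, true_and] using hmem

/-- `FixOut S σ` : `σ` fixes every point outside `S`. -/
def FixOut (S : Finset α) (σ : Equiv.Perm α) : Prop := ∀ a ∉ S, σ a = a

lemma FixOut.zpow {S : Finset α} {σ : Equiv.Perm α} (h : FixOut S σ) (i : ℤ) :
    FixOut S (σ ^ i) := fun a ha => zpow_fix (h a ha) i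

lemma FixOut.zpow_mem {S : Finset α} {σ : Equiv.Perm α} (h : FixOut S σ) {a : α}
    (ha : a ∈ S) (i : ℤ) : (σ ^ i) a ∈ S := by
  by_contra hb
  have hfix : σ ((σ ^ i) a) = (σ ^ i) a := h _ hb
  have h2 : (σ ^ (-i)) ((σ ^ i) a) = (σ ^ i) a := zpow_fix hfix _
  rw [← Equiv.Perm.mul_apply, ← zpow_add, neg_add_cancel, zpow_zero,
    Equiv.Perm.one_apply] at h2
  rw [← h2] at hb
  exact hb ha

lemma FixOut.pow_mem {S : Finset α} {σ : Equiv.Perm α} (h : FixOut S σ) {a : α}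
    (ha : a ∈ S) (k : ℕ) : (σ ^ k) a ∈ S := by
  have := h.zpow_mem ha (k : ℤ)
  rwa [zpow_natCast] at this

lemma mem_of_fixOut {S : Finset α} {σ : Equiv.Perm α} (h : FixOut S σ) {a : α}
    (ha : a ∈ S) : σ a ∈ S := by
  have := h.pow_mem ha 1
  rwa [pow_one] at this

/-- ℕ-power agreement of two permutations preserving `S` and agreeing on `S`. -/
lemma pow_agree {π ρ : Equiv.Perm α} {S : Finset α}
    (hπ : ∀ a ∈ S, π a ∈ S) (hag : ∀ a ∈ S, π a = ρ a) :
    ∀ (k : ℕ) (a : α), a ∈ S → (π ^ k) a = (ρ ^ k) a := by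
  intro k
  induction k with
  | zero => intro a _; simp
  | succ n ih =>
    intro a ha
    rw [pow_succ, Equiv.Perm.mul_apply, pow_succ, Equiv.Perm.mul_apply, ← hag a ha]
    exact ih (π a) (hπ a ha)

lemma inv_mem {π : Equiv.Perm α} {S : Finset α} (hπ : ∀ a ∈ S, π a ∈ S) {a : α}
    (ha : a ∈ S) : π⁻¹ a ∈ S := by
  have himg : S.image π = S := by
    apply Finset.eq_of_subset_of_card_le
    · intro b hb
      simp only [Finset.mem_image] at hb
      obtain ⟨c, hc, rfl⟩ := hb
      exact hπ c hc
    · rw [Finset.card_image_of_injective _ π.injective]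
  rw [← himg] at ha
  simp only [Finset.mem_image] at ha
  obtain ⟨b, hb, hba⟩ := ha
  rw [← hba, Equiv.Perm.coe_inv, Equiv.symm_apply_apply]
  exact hb

lemma inv_agree {π ρ : Equiv.Perm α} {S : Finset α}
    (hπ : ∀ a ∈ S, π a ∈ S) (hρ : ∀ a ∈ S, ρ a ∈ S) (hag : ∀ a ∈ S, π a = ρ a) {a : α}
    (ha : a ∈ S) : π⁻¹ a = ρ⁻¹ a := by
  have hb : π⁻¹ a ∈ S := inv_mem hπ ha
  have h2 : ρ (π⁻¹ a) = a := by rw [← hag _ hb, Equiv.Perm.coe_inv, Equiv.apply_symm_apply]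
  calc π⁻¹ a = ρ⁻¹ (ρ (π⁻¹ a)) := by rw [Equiv.Perm.coe_inv, Equiv.Perm.coe_inv, Equiv.symm_apply_apply]
  _ = ρ⁻¹ a := by rw [h2]

lemma zpow_agree {π ρ : Equiv.Perm α} {S : Finset α}
    (hπ : ∀ a ∈ S, π a ∈ S) (hρ : ∀ a ∈ S, ρ a ∈ S) (hag : ∀ a ∈ S, π a = ρ a)
    (i : ℤ) {a : α} (ha : a ∈ S) : (π ^ i) a = (ρ ^ i) a := by
  cases i with
  | ofNat n =>
    rw [Int.ofNat_eq_coe, zpow_natCast, zpow_natCast]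
    exact pow_agree hπ hag n a ha
  | negSucc n =>
    rw [zpow_negSucc, zpow_negSucc, ← inv_pow, ← inv_pow]
    exact pow_agree (fun a ha => inv_mem hπ ha)
      (fun a ha => inv_agree hπ hρ hag ha) (n + 1) a ha

section Pair

variable {S T : Finset α} {σ' σ'' : Equiv.Perm α}

lemma disj (hST : Disjoint S T) (hσ' : FixOut S σ') (hσ'' : FixOut T σ'') :
    Equiv.Perm.Disjoint σ' σ'' := by
  intro a
  by_cases h : a ∈ S
  · exact Or.inr (hσ'' a (Finset.disjoint_left.mp hST h))
  · exact Or.inl (hσ' a h)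

lemma mul_zpow_left (hST : Disjoint S T) (hσ' : FixOut S σ') (hσ'' : FixOut T σ'')
    (i : ℤ) {a : α} (ha : a ∈ S) : ((σ' * σ'') ^ i) a = (σ' ^ i) a := by
  rw [(disj hST hσ' hσ'').commute.mul_zpow, Equiv.Perm.mul_apply,
    zpow_fix (hσ'' a (Finset.disjoint_left.mp hST ha)) i]

lemma mul_zpow_right (hST : Disjoint S T) (hσ' : FixOut S σ') (hσ'' : FixOut T σ'')
    (i : ℤ) {a : α} (ha : a ∈ T) : ((σ' * σ'') ^ i) a = (σ'' ^ i) a := by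
  rw [(disj hST hσ' hσ'').commute.mul_zpow, Equiv.Perm.mul_apply]
  exact hσ'.zpow i _ (Finset.disjoint_right.mp hST (hσ''.zpow_mem ha i))

lemma mul_zpow_out (hσ' : FixOut S σ') (hσ'' : FixOut T σ'')
    (i : ℤ) {a : α} (haS : a ∉ S) (haT : a ∉ T) : ((σ' * σ'') ^ i) a = a := by
  have : (σ' * σ'') a = a := by
    rw [Equiv.Perm.mul_apply, hσ'' a haT, hσ' a haS]
  exact zpow_fix this i

lemma mul_pow_left (hST : Disjoint S T) (hσ' : FixOut S σ') (hσ'' : FixOut T σ'')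
    (k : ℕ) {a : α} (ha : a ∈ S) : ((σ' * σ'') ^ k) a = (σ' ^ k) a := by
  have := mul_zpow_left hST hσ' hσ'' (k : ℤ) ha
  rwa [zpow_natCast, zpow_natCast] at this

lemma mul_pow_right (hST : Disjoint S T) (hσ' : FixOut S σ') (hσ'' : FixOut T σ'')
    (k : ℕ) {a : α} (ha : a ∈ T) : ((σ' * σ'') ^ k) a = (σ'' ^ k) a := by
  have := mul_zpow_right hST hσ' hσ'' (k : ℤ) ha
  rwa [zpow_natCast, zpow_natCast] at this

lemma sc_mul_left (hST : Disjoint S T) (hσ' : FixOut S σ') (hσ'' : FixOut T σ'')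
    {a b : α} (ha : a ∈ S) : (σ' * σ'').SameCycle a b ↔ σ'.SameCycle a b := by
  constructor
  · rintro ⟨i, rfl⟩; exact ⟨i, (mul_zpow_left hST hσ' hσ'' i ha).symm⟩
  · rintro ⟨i, rfl⟩; exact ⟨i, mul_zpow_left hST hσ' hσ'' i ha⟩

lemma sc_mul_right (hST : Disjoint S T) (hσ' : FixOut S σ') (hσ'' : FixOut T σ'')
    {a b : α} (ha : a ∈ T) : (σ' * σ'').SameCycle a b ↔ σ''.SameCycle a b := by
  constructor
  · rintro ⟨i, rfl⟩; exact ⟨i, (mul_zpow_right hST hσ' hσ'' i ha).symm⟩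
  · rintro ⟨i, rfl⟩; exact ⟨i, mul_zpow_right hST hσ' hσ'' i ha⟩

lemma sc_mul_out (hσ' : FixOut S σ') (hσ'' : FixOut T σ'')
    {a b : α} (haS : a ∉ S) (haT : a ∉ T) : (σ' * σ'').SameCycle a b ↔ b = a := by
  constructor
  · rintro ⟨i, rfl⟩; exact mul_zpow_out hσ' hσ'' i haS haT
  · rintro rfl; exact Equiv.Perm.SameCycle.refl _ _

lemma fixOut_of_restrLE (hσ' : FixOut S σ') {τ : Equiv.Perm α} (h : RestrLE τ σ') :
    FixOut S τ := fun a ha => restrLE_fix h (hσ' a ha)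

/-- Juxtaposition is monotone for the restriction order. -/
lemma restrLE_mul (hST : Disjoint S T) (hσ' : FixOut S σ') (hσ'' : FixOut T σ'')
    {τ' τ'' : Equiv.Perm α} (hτ' : RestrLE τ' σ') (hτ'' : RestrLE τ'' σ'') :
    RestrLE (τ' * τ'') (σ' * σ'') := by
  have hf' : FixOut S τ' := fixOut_of_restrLE hσ' hτ'
  have hf'' : FixOut T τ'' := fixOut_of_restrLE hσ'' hτ''
  constructor
  · intro a b hab
    by_cases haS : a ∈ S
    · exact (sc_mul_left hST hσ' hσ'' haS).mpr
        (hτ'.1 a b ((sc_mul_left hST hf' hf'' haS).mp hab))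
    by_cases haT : a ∈ T
    · exact (sc_mul_right hST hσ' hσ'' haT).mpr
        (hτ''.1 a b ((sc_mul_right hST hf' hf'' haT).mp hab))
    · obtain rfl := (sc_mul_out hf' hf'' haS haT).mp hab
      exact Equiv.Perm.SameCycle.refl _ _
  · intro a
    by_cases haS : a ∈ S
    · obtain ⟨k, hk0, hka, hmin⟩ := hτ'.2 a
      refine ⟨k, hk0, ?_, ?_⟩
      · rw [Equiv.Perm.mul_apply, hf'' a (Finset.disjoint_left.mp hST haS), hka,
          ← mul_pow_left hST hσ' hσ'' k haS]
      · intro j hj0 hjk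
        rw [mul_pow_left hST hσ' hσ'' j haS, sc_mul_left hST hf' hf'' haS]
        exact hmin j hj0 hjk
    by_cases haT : a ∈ T
    · obtain ⟨k, hk0, hka, hmin⟩ := hτ''.2 a
      refine ⟨k, hk0, ?_, ?_⟩
      · have hmem : τ'' a ∈ T := mem_of_fixOut hf'' haT
        rw [Equiv.Perm.mul_apply, hf' _ (Finset.disjoint_right.mp hST hmem), hka,
          ← mul_pow_right hST hσ' hσ'' k haT]
      · intro j hj0 hjk
        rw [mul_pow_right hST hσ' hσ'' j haT, sc_mul_right hST hf' hf'' haT]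
        exact hmin j hj0 hjk
    · refine ⟨1, one_pos, ?_, fun j hj0 hj1 => absurd rfl (by omega : j ≠ j)⟩
      rw [pow_one, Equiv.Perm.mul_apply, Equiv.Perm.mul_apply, hσ'' a haT, hσ' a haS,
        hf'' a haT, hf' a haS]

/-- Factorization: anything below `σ' * σ''` splits as a juxtaposition. -/
lemma restrLE_factor (hST : Disjoint S T) (hσ' : FixOut S σ') (hσ'' : FixOut T σ'')
    {τ : Equiv.Perm α} (h : RestrLE τ (σ' * σ'')) :
    ∃ τ₁ τ₂ : Equiv.Perm α, τ = τ₁ * τ₂ ∧ RestrLE τ₁ σ' ∧ RestrLE τ₂ σ''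
      ∧ FixOut S τ₁ ∧ FixOut T τ₂ := by
  have hτS : ∀ a ∈ S, τ a ∈ S := by
    intro a ha
    obtain ⟨k, hk0, hka, -⟩ := h.2 a
    rw [hka, mul_pow_left hST hσ' hσ'' k ha]
    exact hσ'.pow_mem ha k
  have hτT : ∀ a ∈ T, τ a ∈ T := by
    intro a ha
    obtain ⟨k, hk0, hka, -⟩ := h.2 a
    rw [hka, mul_pow_right hST hσ' hσ'' k ha]
    exact hσ''.pow_mem ha k
  have hτout : ∀ a, a ∉ S → a ∉ T → τ a = a := by
    intro a haS haT
    exact restrLE_fix h (by rw [Equiv.Perm.mul_apply, hσ'' a haT, hσ' a haS])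
  -- the S-component
  have hbij : ∀ (U : Finset α), (∀ a ∈ U, τ a ∈ U) →
      Function.Bijective (fun a => if a ∈ U then τ a else a) := by
    intro U hU
    rw [← Finite.injective_iff_bijective]
    intro a b hab
    simp only at hab
    split_ifs at hab with ha hb hb
    · exact τ.injective hab
    · exact absurd (hab ▸ hU a ha) hb
    · subst hab; exact absurd (hU b hb) ha
    · exact hab
  set τ₁ : Equiv.Perm α := Equiv.ofBijective _ (hbij S hτS) with hτ₁def
  set τ₂ : Equiv.Perm α := Equiv.ofBijective _ (hbij T hτT) with hτ₂def
  have hτ₁S : ∀ a ∈ S, τ₁ a = τ a := by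
    intro a ha; rw [hτ₁def, Equiv.ofBijective_apply, if_pos ha]
  have hτ₁out : FixOut S τ₁ := by
    intro a ha; rw [hτ₁def, Equiv.ofBijective_apply, if_neg ha]
  have hτ₂T : ∀ a ∈ T, τ₂ a = τ a := by
    intro a ha; rw [hτ₂def, Equiv.ofBijective_apply, if_pos ha]
  have hτ₂out : FixOut T τ₂ := by
    intro a ha; rw [hτ₂def, Equiv.ofBijective_apply, if_neg ha]
  have hτ₁mem : ∀ a ∈ S, τ₁ a ∈ S := fun a ha => (hτ₁S a ha) ▸ hτS a ha
  have hτ₂mem : ∀ a ∈ T, τ₂ a ∈ T := fun a ha => (hτ₂T a ha) ▸ hτT a ha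
  have hsc₁ : ∀ a ∈ S, ∀ b, (τ₁.SameCycle a b ↔ τ.SameCycle a b) := by
    intro a ha b
    constructor
    · rintro ⟨i, rfl⟩; exact ⟨i, (zpow_agree hτ₁mem hτS hτ₁S i ha).symm⟩
    · rintro ⟨i, rfl⟩; exact ⟨i, zpow_agree hτ₁mem hτS hτ₁S i ha⟩
  have hsc₂ : ∀ a ∈ T, ∀ b, (τ₂.SameCycle a b ↔ τ.SameCycle a b) := by
    intro a ha b
    constructor
    · rintro ⟨i, rfl⟩; exact ⟨i, (zpow_agree hτ₂mem hτT hτ₂T i ha).symm⟩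
    · rintro ⟨i, rfl⟩; exact ⟨i, zpow_agree hτ₂mem hτT hτ₂T i ha⟩
  refine ⟨τ₁, τ₂, ?_, ⟨?_, ?_⟩, ⟨?_, ?_⟩, hτ₁out, hτ₂out⟩
  · ext a
    by_cases haS : a ∈ S
    · rw [Equiv.Perm.mul_apply, hτ₂out a (Finset.disjoint_left.mp hST haS), hτ₁S a haS]
    by_cases haT : a ∈ T
    · have : τ₂ a ∈ T := hτ₂mem a haT
      rw [Equiv.Perm.mul_apply, hτ₁out _ (Finset.disjoint_right.mp hST this),
        hτ₂T a haT]
    · rw [Equiv.Perm.mul_apply, hτ₂out a haT, hτ₁out a haS, hτout a haS haT]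
  · -- orbits of τ₁ inside orbits of σ'
    intro a b hab
    by_cases haS : a ∈ S
    · exact (sc_mul_left hST hσ' hσ'' haS).mp (h.1 a b ((hsc₁ a haS b).mp hab))
    · obtain ⟨i, rfl⟩ := hab
      rw [zpow_fix (hτ₁out a haS) i]
  · -- first return of τ₁ w.r.t. σ'
    intro a
    by_cases haS : a ∈ S
    · obtain ⟨k, hk0, hka, hmin⟩ := h.2 a
      refine ⟨k, hk0, ?_, ?_⟩
      · rw [hτ₁S a haS, hka, mul_pow_left hST hσ' hσ'' k haS]
      · intro j hj0 hjk
        rw [hsc₁ a haS, ← mul_pow_left hST hσ' hσ'' j haS]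
        exact hmin j hj0 hjk
    · refine ⟨1, one_pos, ?_, fun j hj0 hj1 => absurd rfl (by omega : j ≠ j)⟩
      rw [pow_one, hτ₁out a haS, hσ' a haS]
  · intro a b hab
    by_cases haT : a ∈ T
    · exact (sc_mul_right hST hσ' hσ'' haT).mp (h.1 a b ((hsc₂ a haT b).mp hab))
    · obtain ⟨i, rfl⟩ := hab
      rw [zpow_fix (hτ₂out a haT) i]
  · intro a
    by_cases haT : a ∈ T
    · obtain ⟨k, hk0, hka, hmin⟩ := h.2 a
      refine ⟨k, hk0, ?_, ?_⟩
      · rw [hτ₂T a haT, hka, mul_pow_right hST hσ' hσ'' k haT]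
      · intro j hj0 hjk
        rw [hsc₂ a haT, ← mul_pow_right hST hσ' hσ'' j haT]
        exact hmin j hj0 hjk
    · refine ⟨1, one_pos, ?_, fun j hj0 hj1 => absurd rfl (by omega : j ≠ j)⟩
      rw [pow_one, hτ₂out a haT, hσ'' a haT]

lemma factor_unique (hST : Disjoint S T) {τ₁ τ₂ ρ₁ ρ₂ : Equiv.Perm α}
    (h1 : FixOut S τ₁) (h2 : FixOut T τ₂) (h3 : FixOut S ρ₁) (h4 : FixOut T ρ₂)
    (heq : τ₁ * τ₂ = ρ₁ * ρ₂) : τ₁ = ρ₁ ∧ τ₂ = ρ₂ := by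
  have e1 : τ₁ = ρ₁ := by
    ext a
    by_cases ha : a ∈ S
    · have haT := Finset.disjoint_left.mp hST ha
      have hc : (τ₁ * τ₂) a = (ρ₁ * ρ₂) a := by rw [heq]
      rwa [Equiv.Perm.mul_apply, h2 a haT, Equiv.Perm.mul_apply, h4 a haT] at hc
    · rw [h1 a ha, h3 a ha]
  exact ⟨e1, mul_left_cancel (e1 ▸ heq)⟩

/-- Multiplicativity of the Möbius function. -/
lemma mu_mul (hST : Disjoint S T) (hσ' : FixOut S σ') (hσ'' : FixOut T σ'')
    (mu : Equiv.Perm α → Equiv.Perm α → ℚ)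
    (hmu_refl : ∀ σ : Equiv.Perm α, mu σ σ = 1)
    (hmu_sum : ∀ τ σ : Equiv.Perm α, RestrLE τ σ → τ ≠ σ →
      ∑ ρ ∈ Finset.univ.filter (fun ρ => RestrLE τ ρ ∧ RestrLE ρ σ), mu ρ σ = 0) :
    ∀ (τ' τ'' : Equiv.Perm α), RestrLE τ' σ' → RestrLE τ'' σ'' →
      mu (τ' * τ'') (σ' * σ'') = mu τ' σ' * mu τ'' σ'' := by
  suffices H : ∀ n (τ' τ'' : Equiv.Perm α), RestrLE τ' σ' → RestrLE τ'' σ'' →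
      (scPairs (σ' * σ'')).card - (scPairs (τ' * τ'')).card = n →
      mu (τ' * τ'') (σ' * σ'') = mu τ' σ' * mu τ'' σ'' by
    intro τ' τ'' h1 h2
    exact H _ τ' τ'' h1 h2 rfl
  intro n
  induction n using Nat.strong_induction_on with
  | _ n ih =>
  intro τ' τ'' hτ' hτ'' hn
  have hfτ' : FixOut S τ' := fixOut_of_restrLE hσ' hτ'
  have hfτ'' : FixOut T τ'' := fixOut_of_restrLE hσ'' hτ''
  by_cases heqq : τ' * τ'' = σ' * σ''
  · obtain ⟨e1, e2⟩ := factor_unique hST hfτ' hfτ'' hσ' hσ'' heqq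
    rw [e1, e2, hmu_refl, hmu_refl, hmu_refl, one_mul]
  · have hle : RestrLE (τ' * τ'') (σ' * σ'') := restrLE_mul hST hσ' hσ'' hτ' hτ''
    set B : Finset (Equiv.Perm α × Equiv.Perm α) :=
      (Finset.univ.filter fun ρ' => RestrLE τ' ρ' ∧ RestrLE ρ' σ') ×ˢ
      (Finset.univ.filter fun ρ'' => RestrLE τ'' ρ'' ∧ RestrLE ρ'' σ'') with hB
    have hmemB : ∀ p ∈ B, (RestrLE τ' p.1 ∧ RestrLE p.1 σ') ∧
        (RestrLE τ'' p.2 ∧ RestrLE p.2 σ'') := by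
      intro p hp
      rw [hB, Finset.mem_product] at hp
      simp only [Finset.mem_filter, Finset.mem_univ, true_and] at hp
      exact hp
    have hsum0 : ∑ ρ ∈ Finset.univ.filter
        (fun ρ => RestrLE (τ' * τ'') ρ ∧ RestrLE ρ (σ' * σ'')), mu ρ (σ' * σ'') = 0 :=
      hmu_sum _ _ hle heqq
    have hbijsum : ∑ p ∈ B, mu (p.1 * p.2) (σ' * σ'') = ∑ ρ ∈ Finset.univ.filter
        (fun ρ => RestrLE (τ' * τ'') ρ ∧ RestrLE ρ (σ' * σ'')), mu ρ (σ' * σ'') := by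
      refine Finset.sum_bij (fun p _ => p.1 * p.2) ?_ ?_ ?_ (fun p hp => rfl)
      · intro p hp
        obtain ⟨⟨h1, h2⟩, h3, h4⟩ := hmemB p hp
        simp only [Finset.mem_filter, Finset.mem_univ, true_and]
        exact ⟨restrLE_mul hST (fixOut_of_restrLE hσ' h2) (fixOut_of_restrLE hσ'' h4) h1 h3,
          restrLE_mul hST hσ' hσ'' h2 h4⟩
      · intro p hp q hq hpq
        obtain ⟨⟨_, h2⟩, _, h4⟩ := hmemB p hp
        obtain ⟨⟨_, h6⟩, _, h8⟩ := hmemB q hq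
        obtain ⟨e1, e2⟩ := factor_unique hST (fixOut_of_restrLE hσ' h2)
          (fixOut_of_restrLE hσ'' h4) (fixOut_of_restrLE hσ' h6)
          (fixOut_of_restrLE hσ'' h8) hpq
        exact Prod.ext e1 e2
      · intro ρ hρ
        simp only [Finset.mem_filter, Finset.mem_univ, true_and] at hρ
        obtain ⟨hρ1, hρ2⟩ := hρ
        obtain ⟨ρ₁, ρ₂, hfact, hρ₁, hρ₂, hf₁, hf₂⟩ := restrLE_factor hST hσ' hσ'' hρ2
        rw [hfact] at hρ1
        obtain ⟨π₁, π₂, hfact2, hπ₁, hπ₂, hg₁, hg₂⟩ := restrLE_factor hST hf₁ hf₂ hρ1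
        obtain ⟨e1, e2⟩ := factor_unique hST hg₁ hg₂ hfτ' hfτ'' hfact2.symm
        refine ⟨(ρ₁, ρ₂), ?_, hfact.symm⟩
        rw [hB, Finset.mem_product]
        simp only [Finset.mem_filter, Finset.mem_univ, true_and]
        exact ⟨⟨e1 ▸ hπ₁, hρ₁⟩, ⟨e2 ▸ hπ₂, hρ₂⟩⟩
    have hprod0 : ∑ p ∈ B, mu p.1 σ' * mu p.2 σ'' = 0 := by
      have hps : ∑ p ∈ B, mu p.1 σ' * mu p.2 σ'' =
          (∑ ρ' ∈ Finset.univ.filter (fun ρ' => RestrLE τ' ρ' ∧ RestrLE ρ' σ'), mu ρ' σ') *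
          (∑ ρ'' ∈ Finset.univ.filter (fun ρ'' => RestrLE τ'' ρ'' ∧ RestrLE ρ'' σ''), mu ρ'' σ'') := by
        rw [Finset.sum_mul_sum, hB]
        exact Finset.sum_product' _ _ (fun a b => mu a σ' * mu b σ'')
      rw [hps]
      by_cases hτσ : τ' = σ'
      · have hτσ'' : τ'' ≠ σ'' := fun h => heqq (by rw [hτσ, h])
        rw [hmu_sum τ'' σ'' hτ'' hτσ'', mul_zero]
      · rw [hmu_sum τ' σ' hτ' hτσ, zero_mul]
    have hterm : ∀ p ∈ B, p ≠ (τ', τ'') →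
        mu (p.1 * p.2) (σ' * σ'') = mu p.1 σ' * mu p.2 σ'' := by
      intro p hp hne
      obtain ⟨⟨h1, h2⟩, h3, h4⟩ := hmemB p hp
      have hnemul : τ' * τ'' ≠ p.1 * p.2 := by
        intro heq
        obtain ⟨e1, e2⟩ := factor_unique hST hfτ' hfτ''
          (fixOut_of_restrLE hσ' h2) (fixOut_of_restrLE hσ'' h4) heq
        exact hne (Prod.ext e1.symm e2.symm)
      have hlt1 : (scPairs (τ' * τ'')).card < (scPairs (p.1 * p.2)).card :=
        scPairs_card_lt (restrLE_mul hST (fixOut_of_restrLE hσ' h2)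
          (fixOut_of_restrLE hσ'' h4) h1 h3) hnemul
      have hle2 : (scPairs (p.1 * p.2)).card ≤ (scPairs (σ' * σ'')).card :=
        Finset.card_le_card (scPairs_subset (restrLE_mul hST hσ' hσ'' h2 h4))
      have hle3 : (scPairs (τ' * τ'')).card ≤ (scPairs (σ' * σ'')).card :=
        Finset.card_le_card (scPairs_subset hle)
      exact ih ((scPairs (σ' * σ'')).card - (scPairs (p.1 * p.2)).card)
        (by omega) p.1 p.2 h2 h4 rfl
    have hmemτ : (τ', τ'') ∈ B := by
      rw [hB, Finset.mem_product]
      simp only [Finset.mem_filter, Finset.mem_univ, true_and]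
      exact ⟨⟨restrLE_refl τ', hτ'⟩, restrLE_refl τ'', hτ''⟩
    have e1 := Finset.add_sum_erase B (fun p => mu (p.1 * p.2) (σ' * σ'')) hmemτ
    have e2 := Finset.add_sum_erase B (fun p => mu p.1 σ' * mu p.2 σ'') hmemτ
    have e3 : ∑ p ∈ B.erase (τ', τ''), mu (p.1 * p.2) (σ' * σ'') =
        ∑ p ∈ B.erase (τ', τ''), mu p.1 σ' * mu p.2 σ'' :=
      Finset.sum_congr rfl fun p hp =>
        hterm p (Finset.mem_of_mem_erase hp) (Finset.ne_of_mem_erase hp)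
    rw [hbijsum, hsum0] at e1
    rw [hprod0] at e2
    simp only at e1 e2
    linarith

end Pair

end JuxtAux

theorem juxt_powersum (S T : Finset α) (hST : Disjoint S T)
    (σ' σ'' : Equiv.Perm α)
    (hσ' : ∀ a ∉ S, σ' a = a) (hσ'' : ∀ a ∉ T, σ'' a = a)
    (mu : Equiv.Perm α → Equiv.Perm α → ℚ)
    (hmu_refl : ∀ σ : Equiv.Perm α, mu σ σ = 1)
    (hmu_sum : ∀ τ σ : Equiv.Perm α, RestrLE τ σ → τ ≠ σ →
      ∑ ρ ∈ Finset.univ.filter (fun ρ => RestrLE τ ρ ∧ RestrLE ρ σ), mu ρ σ = 0) :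
    juxt (powersum mu σ') (powersum mu σ'') = powersum mu (σ' * σ'') := by
  have hσ'f : JuxtAux.FixOut S σ' := hσ'
  have hσ''f : JuxtAux.FixOut T σ'' := hσ''
  have key : juxt (powersum mu σ') (powersum mu σ'') =
      ∑ τ' ∈ Finset.univ.filter (fun τ => RestrLE τ σ'),
        ∑ τ'' ∈ Finset.univ.filter (fun τ => RestrLE τ σ''),
          Finsupp.single (τ' * τ'') (mu τ' σ' * mu τ'' σ'') := by
    rw [juxt, powersum,
      ← Finsupp.sum_finset_sum_index
        (by intro a; simp)
        (by intro a b₁ b₂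
            simp only [Finsupp.sum, add_mul, Finsupp.single_add]
            rw [← Finset.sum_add_distrib])]
    refine Finset.sum_congr rfl fun τ' _ => ?_
    rw [Finsupp.sum_single_index (by simp), powersum,
      ← Finsupp.sum_finset_sum_index
        (by intro a; simp)
        (by intro a b₁ b₂; rw [mul_add, Finsupp.single_add])]
    refine Finset.sum_congr rfl fun τ'' _ => ?_
    rw [Finsupp.sum_single_index (by simp)]
  rw [key, powersum, ← Finset.sum_product']
  refine Finset.sum_bij (fun p _ => p.1 * p.2) ?_ ?_ ?_ ?_
  · intro p hp
    rw [Finset.mem_product] at hp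
    simp only [Finset.mem_filter, Finset.mem_univ, true_and] at *
    exact JuxtAux.restrLE_mul hST hσ'f hσ''f hp.1 hp.2
  · intro p hp q hq hpq
    rw [Finset.mem_product] at hp hq
    simp only [Finset.mem_filter, Finset.mem_univ, true_and] at hp hq
    obtain ⟨e1, e2⟩ := JuxtAux.factor_unique hST
      (JuxtAux.fixOut_of_restrLE hσ'f hp.1) (JuxtAux.fixOut_of_restrLE hσ''f hp.2)
      (JuxtAux.fixOut_of_restrLE hσ'f hq.1) (JuxtAux.fixOut_of_restrLE hσ''f hq.2) hpq
    exact Prod.ext e1 e2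
  · intro ρ hρ
    simp only [Finset.mem_filter, Finset.mem_univ, true_and] at hρ
    obtain ⟨ρ₁, ρ₂, hfact, hρ₁, hρ₂, -, -⟩ :=
      JuxtAux.restrLE_factor hST hσ'f hσ''f hρ
    refine ⟨(ρ₁, ρ₂), ?_, hfact.symm⟩
    rw [Finset.mem_product]
    simp only [Finset.mem_filter, Finset.mem_univ, true_and]
    exact ⟨hρ₁, hρ₂⟩
  · intro p hp
    rw [Finset.mem_product] at hp
    simp only [Finset.mem_filter, Finset.mem_univ, true_and] at hp
    rw [JuxtAux.mu_mul hST hσ'f hσ''f mu hmu_refl hmu_sum p.1 p.2 hp.1 hp.2]
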